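/- Let c₀, c₁, …, cₙ be distinct Gaussian integers such that {c₀, …, cₙ} is an n-universal set, and let b₀, b₁, …, bₙ be distinct Gaussian integers such that |∏_{0 ≤ i < j ≤ n} (b_i − b_j)| = |∏_{0 ≤ i < j ≤ n} (c_i − c_j)|. Then {b₀, …, bₙ} is also an n-universal set. -/

import Mathlib

open Polynomial

/-- The fraction field of the Gaussian integers. -/
abbrev FF : Type := FractionRing GaussianInt

/-- The canonical embedding of `ℤ[i]` into its fraction field. -/
noncomputable def ι : GaussianInt →+* FF := algebraMap GaussianInt FF

/-- A polynomial with coefficients in the fraction field of `ℤ[i]` is integer-valued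
if it takes values in (the image of) `ℤ[i]` at every Gaussian integer. -/
def IntegerValued (f : FF[X]) : Prop :=
  ∀ z : GaussianInt, f.eval (ι z) ∈ Set.range ι

/-- A set `M ⊆ ℤ[i]` is `n`-universal if every polynomial of degree at most `n`
with coefficients in the fraction field of `ℤ[i]` taking integer values on `M`
is integer-valued. -/
def IsNUniversal (n : ℕ) (M : Set GaussianInt) : Prop :=
  ∀ f : FF[X], f.natDegree ≤ n → (∀ c ∈ M, f.eval (ι c) ∈ Set.range ι) → IntegerValued f

/-- The volume of a family of Gaussian integers: the product of all pairwise
differences `x i - x j` over pairs `i < j`. -/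
def volume {n : ℕ} (x : Fin (n + 1) → GaussianInt) : GaussianInt :=
  ∏ ij ∈ Finset.univ.filter (fun ij : Fin (n + 1) × Fin (n + 1) => ij.1 < ij.2),
    (x ij.1 - x ij.2)

private lemma prod_pairs_eq {M : Type*} [CommMonoid M] {m : ℕ} (g : Fin m → Fin m → M) :
    ∏ ij ∈ Finset.univ.filter (fun ij : Fin m × Fin m => ij.1 < ij.2), g ij.1 ij.2
      = ∏ i : Fin m, ∏ j ∈ Finset.Ioi i, g i j := by
  rw [Finset.prod_sigma']
  exact Finset.prod_nbij' (fun p => ⟨p.1, p.2⟩) (fun p => (p.1, p.2))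
    (by simp [Finset.mem_Ioi]) (by simp [Finset.mem_Ioi]) (by simp) (by simp) (by simp)

/-- The absolute value of the "Vandermonde" product agrees with that of the volume. -/
private lemma abs_vdm_eq_abs_volume {n : ℕ} (x : Fin (n + 1) → GaussianInt) :
    ‖GaussianInt.toComplex (∏ i, ∏ j ∈ Finset.Ioi i, (x j - x i))‖
      = ‖GaussianInt.toComplex (volume x)‖ := by
  rw [volume, prod_pairs_eq (fun i j => x i - x j)]
  rw [map_prod, map_prod, norm_prod, norm_prod]
  refine Finset.prod_congr rfl fun i _ => ?_
  rw [map_prod, map_prod, norm_prod, norm_prod]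
  refine Finset.prod_congr rfl fun j _ => ?_
  rw [← norm_neg, ← map_neg, neg_sub]

private lemma isUnit_of_abs_eq_one (z : GaussianInt)
    (h : ‖GaussianInt.toComplex z‖ = 1) : IsUnit z := by
  rw [← Zsqrtd.norm_eq_one_iff]
  have h2 : (z.norm : ℝ) = 1 := by
    rw [GaussianInt.intCast_real_norm, ← Complex.sq_norm, h]; norm_num
  have : z.norm = 1 := by exact_mod_cast h2
  simp [this]

/-- If `c` enumerates an `n`-universal set of `n + 1` distinct Gaussian integers and `b`
is a family of `n + 1` distinct Gaussian integers whose volume has the same absolute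
value, then `b` also enumerates an `n`-universal set. -/
theorem universal_of_eq_volume (n : ℕ) (c b : Fin (n + 1) → GaussianInt)
    (hc : Function.Injective c) (hb : Function.Injective b)
    (huniv : IsNUniversal n (Set.range c))
    (hvol : ‖GaussianInt.toComplex (volume b)‖ =
      ‖GaussianInt.toComplex (volume c)‖) :
    IsNUniversal n (Set.range b) := by
  classical
  have hι : Function.Injective ι := IsFractionRing.injective GaussianInt FF
  set vb : Fin (n + 1) → FF := fun i => ι (b i) with hvb_def
  set vc : Fin (n + 1) → FF := fun i => ι (c i) with hvc_def
  have hvbInj : Set.InjOn vb (Finset.univ : Finset (Fin (n + 1))) :=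
    (hι.comp hb).injOn
  have hvcInj : Set.InjOn vc (Finset.univ : Finset (Fin (n + 1))) :=
    (hι.comp hc).injOn
  have hcard : (Finset.univ : Finset (Fin (n + 1))).card = n + 1 := by simp
  set Lc : Fin (n + 1) → FF[X] := fun i => Lagrange.basis Finset.univ vc i with hLc_def
  -- each Lagrange basis polynomial at the nodes `c` is integer-valued
  have hLcint : ∀ i, IntegerValued (Lc i) := by
    intro i
    refine huniv (Lc i) ?_ ?_
    · rw [hLc_def]
      simp only []
      rw [Lagrange.natDegree_basis hvcInj (Finset.mem_univ i), hcard]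
      omega
    · rintro _ ⟨j, rfl⟩
      by_cases hij : i = j
      · subst hij
        rw [show ι (c i) = vc i from rfl,
          Lagrange.eval_basis_self hvcInj (Finset.mem_univ i)]
        exact ⟨1, map_one ι⟩
      · rw [show ι (c j) = vc j from rfl,
          Lagrange.eval_basis_of_ne hij (Finset.mem_univ j)]
        exact ⟨0, map_zero ι⟩
  -- the matrix of values of the `c`-Lagrange basis at the points `b`
  set A : Matrix (Fin (n + 1)) (Fin (n + 1)) GaussianInt :=
    fun i j => (hLcint i (b j)).choose with hA_def
  have hA : ∀ i j, ι (A i j) = (Lc i).eval (vb j) := fun i j =>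
    (hLcint i (b j)).choose_spec
  -- the Vandermonde matrix identity
  have hmat : (Matrix.vandermonde vc).transpose * A.map ι
      = (Matrix.vandermonde vb).transpose := by
    ext k j
    have hXk : (Polynomial.X ^ (k : ℕ) : FF[X])
        = Lagrange.interpolate Finset.univ vc (fun i => vc i ^ (k : ℕ)) := by
      refine Lagrange.eq_interpolate_of_eval_eq _ hvcInj ?_ (fun i _ => by simp)
      rw [hcard, Polynomial.degree_X_pow]
      exact_mod_cast k.isLt
    have := congrArg (Polynomial.eval (vb j)) hXk
    rw [Lagrange.interpolate_apply] at this
    simp only [Polynomial.eval_pow, Polynomial.eval_X, Polynomial.eval_finset_sum,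
      Polynomial.eval_mul, Polynomial.eval_C] at this
    simp only [Matrix.mul_apply, Matrix.transpose_apply, Matrix.vandermonde,
      Matrix.of_apply, Matrix.map_apply]
    rw [Finset.sum_congr rfl (fun i _ => by rw [hA i j])]
    exact this.symm
  -- take determinants
  have hdet : ι A.det * (Matrix.vandermonde vc).det = (Matrix.vandermonde vb).det := by
    have h := congrArg Matrix.det hmat
    rw [Matrix.det_mul, Matrix.det_transpose, Matrix.det_transpose,
      ← RingHom.mapMatrix_apply, ← RingHom.map_det] at h
    rw [mul_comm]
    exact h
  -- translate into an equation in ℤ[i]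
  have hVc : (Matrix.vandermonde vc).det = ι (∏ i, ∏ j ∈ Finset.Ioi i, (c j - c i)) := by
    rw [Matrix.det_vandermonde, map_prod]
    refine Finset.prod_congr rfl fun i _ => ?_
    rw [map_prod]
    exact Finset.prod_congr rfl fun j _ => (map_sub ι _ _).symm
  have hVb : (Matrix.vandermonde vb).det = ι (∏ i, ∏ j ∈ Finset.Ioi i, (b j - b i)) := by
    rw [Matrix.det_vandermonde, map_prod]
    refine Finset.prod_congr rfl fun i _ => ?_
    rw [map_prod]
    exact Finset.prod_congr rfl fun j _ => (map_sub ι _ _).symm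
  have hZ : A.det * (∏ i, ∏ j ∈ Finset.Ioi i, (c j - c i))
      = ∏ i, ∏ j ∈ Finset.Ioi i, (b j - b i) := by
    apply hι
    rw [map_mul, ← hVc, hdet, hVb]
  -- the determinant of A is a unit
  have hprodne : (∏ i, ∏ j ∈ Finset.Ioi i, (c j - c i)) ≠ (0 : GaussianInt) := by
    rw [Finset.prod_ne_zero_iff]
    intro i _
    rw [Finset.prod_ne_zero_iff]
    intro j hj
    rw [sub_ne_zero]
    exact fun h => (Finset.mem_Ioi.mp hj).ne' (hc h)
  have hcne : ‖GaussianInt.toComplex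
      (∏ i, ∏ j ∈ Finset.Ioi i, (c j - c i))‖ ≠ 0 :=
    norm_ne_zero_iff.mpr (fun h => hprodne (GaussianInt.toComplex_eq_zero.mp h))
  have habs : ‖GaussianInt.toComplex A.det‖ = 1 := by
    have h := congrArg (fun z => ‖GaussianInt.toComplex z‖) hZ
    simp only [map_mul, norm_mul] at h
    rw [abs_vdm_eq_abs_volume b, hvol, ← abs_vdm_eq_abs_volume c] at h
    exact mul_right_cancel₀ hcne (by rw [h, one_mul])
  have hAdet : IsUnit A.det := isUnit_of_abs_eq_one _ habs
  -- invert A over ℤ[i]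
  have hBA : A⁻¹ * A = 1 := Matrix.nonsing_inv_mul A hAdet
  set B : Matrix (Fin (n + 1)) (Fin (n + 1)) GaussianInt := A⁻¹ with hB_def
  -- the `b`-Lagrange basis is an ℤ[i]-combination of the `c`-Lagrange basis
  have hLb : ∀ j, Lagrange.basis Finset.univ vb j
      = ∑ i, Polynomial.C (ι (B j i)) * Lc i := by
    intro j
    refine Polynomial.eq_of_degrees_lt_of_eval_index_eq Finset.univ hvbInj ?_ ?_ ?_
    · rw [Lagrange.degree_basis hvbInj (Finset.mem_univ j), hcard]
      exact_mod_cast Nat.cast_lt.mpr (Nat.lt_succ_self n)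
    · refine lt_of_le_of_lt (Polynomial.degree_sum_le _ _) ?_
      rw [hcard, Finset.sup_lt_iff (by exact_mod_cast WithBot.bot_lt_coe (n + 1))]
      intro i _
      refine lt_of_le_of_lt ((Polynomial.degree_mul_le _ _).trans
        (by simpa using add_le_add (Polynomial.degree_C_le) (le_refl
          (Lc i).degree))) ?_
      rw [hLc_def]
      simp only []
      rw [Lagrange.degree_basis hvcInj (Finset.mem_univ i), hcard]
      exact_mod_cast Nat.cast_lt.mpr (Nat.lt_succ_self n)
    · intro m _
      have hrhs : Polynomial.eval (vb m) (∑ i, Polynomial.C (ι (B j i)) * Lc i)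
          = ι ((B * A) j m) := by
        rw [Polynomial.eval_finset_sum]
        simp only [Polynomial.eval_mul, Polynomial.eval_C]
        rw [Matrix.mul_apply, map_sum]
        exact Finset.sum_congr rfl fun i _ => by rw [map_mul, hA i m]
      rw [hrhs, hBA]
      by_cases hjm : j = m
      · subst hjm
        rw [Lagrange.eval_basis_self hvbInj (Finset.mem_univ j),
          Matrix.one_apply_eq, map_one]
      · rw [Lagrange.eval_basis_of_ne hjm (Finset.mem_univ m),
          Matrix.one_apply_ne hjm, map_zero]
  -- conclude
  intro f hdeg hvals z
  have hdegf : f.degree < (Finset.univ : Finset (Fin (n + 1))).card := by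
    rw [hcard]
    refine lt_of_le_of_lt f.degree_le_natDegree ?_
    exact_mod_cast Nat.lt_succ_of_le hdeg
  have hf := Lagrange.eq_interpolate hvbInj hdegf
  have heval : f.eval (ι z)
      = ∑ j, f.eval (vb j) * (Lagrange.basis Finset.univ vb j).eval (ι z) := by
    conv_lhs => rw [hf]
    rw [Lagrange.interpolate_apply, Polynomial.eval_finset_sum]
    exact Finset.sum_congr rfl fun j _ => by
      rw [Polynomial.eval_mul, Polynomial.eval_C]
  rw [heval]
  have hrange : ∀ y : FF, y ∈ Set.range ι ↔ y ∈ ι.range := by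
    intro y; rw [RingHom.mem_range]; rfl
  rw [hrange]
  refine Subring.sum_mem _ fun j _ => ?_
  refine Subring.mul_mem _ ?_ ?_
  · rw [← hrange]; exact hvals (b j) ⟨j, rfl⟩
  · rw [hLb j, Polynomial.eval_finset_sum]
    refine Subring.sum_mem _ fun i _ => ?_
    rw [Polynomial.eval_mul, Polynomial.eval_C]
    refine Subring.mul_mem _ ⟨B j i, rfl⟩ ?_
    rw [← hrange]
    exact hLcint i z
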